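/- Let G be a non-archimedean CLI Polish group, N a closed normal subgroup of G, and α < ω₁. If G is α-CLI then the quotient group G/N is α-CLI, and if G is L-α-CLI then G/N is L-α-CLI. In particular, rank(G/N) ≤ rank(G). -/

import Mathlib

noncomputable section

/-- `omegaPart a` is ω(a): the largest limit ordinal `≤ a`, or `0` if there is none. -/
def omegaPart (a : Ordinal) : Ordinal :=
  sSup {b : Ordinal | (b = 0 ∨ Order.IsSuccLimit b) ∧ b ≤ a}

/-- `IsTree lt` says that the binary relation `lt` on `T` is a tree order: it is irreflexive,
transitive, and the set of predecessors of any node is finite and linearly ordered. -/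
def IsTree {T : Type*} (lt : T → T → Prop) : Prop :=
  (∀ s, ¬ lt s s) ∧
  (∀ s t u, lt s t → lt t u → lt s u) ∧
  (∀ s, {t | lt t s}.Finite) ∧
  (∀ s t u, lt t s → lt u s → t = u ∨ lt t u ∨ lt u t)

/-- The length `lh s` of a node of a tree: the number of its strict predecessors. -/
def lh {T : Type*} (lt : T → T → Prop) (s : T) : ℕ :=
  Nat.card {t | lt t s}

/-- The rank `ρ(T)` of a tree `(T, lt)`: for a well-founded tree it is
`sup { ρ_T(s) + 1 : s ∈ T }` where `ρ_T(s) = sup { ρ_T(t) + 1 : s < t }`;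
for an ill-founded tree we use the junk value `0`. -/
def rhoRel {T : Type u} (lt : T → T → Prop) : Ordinal.{u} :=
  letI := Classical.dec (WellFounded (Function.swap lt))
  if h : WellFounded (Function.swap lt) then ⨆ s : T, Order.succ ((h.apply s).rank) else 0

/-- The nodes of the tree `T_ℰ^X` associated to a sequence `E` of (equivalence) relations
on `X`: pairs `(n, C)` where `C` is a non-singleton class `[x]_{E n}`. -/
def TreeNode (X : Type u) (E : ℕ → X → X → Prop) : Type u :=
  {p : ℕ × Set X // ∃ x : X, p.2 = {y | E p.1 x y} ∧ p.2 ≠ {x}}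

/-- The tree order on `T_ℰ^X`: `(n, C) < (m, D)` iff `n < m` and `C ⊇ D`. -/
def nodeLT {X : Type u} (E : ℕ → X → X → Prop) :
    TreeNode X E → TreeNode X E → Prop :=
  fun s t => s.1.1 < t.1.1 ∧ t.1.2 ⊆ s.1.2

/-- The tree `T_ℰ^X` is well-founded: no infinite strictly increasing sequence. -/
def TreeWF (X : Type u) (E : ℕ → X → X → Prop) : Prop :=
  WellFounded (Function.swap (nodeLT E))

/-- The rank `ρ(T_ℰ^X)`. -/
def treeRho (X : Type u) (E : ℕ → X → X → Prop) : Ordinal.{u} :=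
  rhoRel (nodeLT E)

/-- A Polish group: a topological group whose topology is Polish. -/
def IsPolishGroup (G : Type u) [Group G] [TopologicalSpace G] : Prop :=
  IsTopologicalGroup G ∧ PolishSpace G

/-- A topological group is non-archimedean if the open subgroups form a
neighborhood base of the identity. -/
def IsNonArch (G : Type u) [Group G] [TopologicalSpace G] : Prop :=
  ∀ U ∈ nhds (1 : G), ∃ H : Subgroup G, IsOpen (H : Set G) ∧ (H : Set G) ⊆ U

/-- A topological group is CLI if it admits a compatible complete left-invariant metric. -/
def IsCLI (G : Type u) [Group G] [TopologicalSpace G] : Prop :=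
  ∃ m : MetricSpace G,
    m.toUniformSpace.toTopologicalSpace = ‹TopologicalSpace G› ∧
    @CompleteSpace G m.toUniformSpace ∧
    ∀ g h k : G, m.dist (g * h) (g * k) = m.dist h k

/-- A topological group is TSI if it admits a compatible complete two-sided-invariant metric. -/
def IsTSI (G : Type u) [Group G] [TopologicalSpace G] : Prop :=
  ∃ m : MetricSpace G,
    m.toUniformSpace.toTopologicalSpace = ‹TopologicalSpace G› ∧
    @CompleteSpace G m.toUniformSpace ∧
    ∀ g h k : G, m.dist (g * h) (g * k) = m.dist h k ∧ m.dist (h * g) (k * g) = m.dist h k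

/-- `Dgnb G` is the set `dgnb(G)`: decreasing sequences `(G_n)` of open subgroups of `G`
with `G_0 = G` forming a neighborhood base of `1_G`. -/
structure Dgnb (G : Type u) [Group G] [TopologicalSpace G] where
  seq : ℕ → Subgroup G
  isOpen : ∀ n, IsOpen ((seq n : Set G))
  antitone : ∀ n, seq (n + 1) ≤ seq n
  zero_eq_top : seq 0 = ⊤
  basis : ∀ U ∈ nhds (1 : G), ∃ n, ((seq n : Set G)) ⊆ U

/-- The orbit equivalence relation of (the action of) a subgroup `H ≤ G` on a `G`-space `X`:
`x ∼ y` iff `g • x = y` for some `g ∈ H`. -/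
def subOrbit {G : Type u} [Group G] (H : Subgroup G) (X : Type v) [MulAction G X] :
    X → X → Prop :=
  fun x y => ∃ g ∈ H, g • x = y

/-- The tree `T_𝒢^X` of a `𝒢 ∈ dgnb(G)` and a `G`-space `X`: nodes are pairs `(n, C)`
with `C` a non-singleton `G_n`-orbit. We record it by its defining sequence of relations. -/
def dgnbRel {G : Type u} [Group G] [TopologicalSpace G] (𝒢 : Dgnb G) (X : Type v)
    [MulAction G X] : ℕ → X → X → Prop :=
  fun n => subOrbit (𝒢.seq n) X

/-- `ρ^k(𝒢) = ρ(T_𝒢^{G/G_k})`, where `G` acts by left translation on `G/G_k`. -/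
def rhoK {G : Type u} [Group G] [TopologicalSpace G] (𝒢 : Dgnb G) (k : ℕ) : Ordinal.{u} :=
  treeRho (G ⧸ 𝒢.seq k) (dgnbRel 𝒢 (G ⧸ 𝒢.seq k))

/-- `ρ(𝒢) = ρ(T_𝒢^{X(𝒢)})` where `X(𝒢) = ⊔_k G/G_k` is the disjoint union of the coset
spaces, with `G` acting by left translation on each summand. -/
def rhoDgnb {G : Type u} [Group G] [TopologicalSpace G] (𝒢 : Dgnb G) : Ordinal.{u} :=
  treeRho (Σ k : ℕ, G ⧸ 𝒢.seq k)
    (fun n p q => ∃ g ∈ 𝒢.seq n, q = ⟨p.1, g • p.2⟩)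

/-- `G` is α-CLI if `ρ(𝒢) ≤ ω·α` for any (equivalently, some) `𝒢 ∈ dgnb(G)`. -/
def IsAlphaCLI (G : Type u) [Group G] [TopologicalSpace G] (α : Ordinal.{u}) : Prop :=
  ∀ 𝒢 : Dgnb G, rhoDgnb 𝒢 ≤ Ordinal.omega0 * α

/-- `G` is L-α-CLI if `rank(G) ≤ α`, i.e. `ω(ρ(𝒢)) ≤ ω·α` for any (equivalently, some)
`𝒢 ∈ dgnb(G)`. -/
def IsLAlphaCLI (G : Type u) [Group G] [TopologicalSpace G] (α : Ordinal.{u}) : Prop :=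
  ∀ 𝒢 : Dgnb G, omegaPart (rhoDgnb 𝒢) ≤ Ordinal.omega0 * α

def WellFounded.rank {α : Type u} {r : α → α → Prop} (h : WellFounded r) (a : α) : Ordinal.{u} :=
  (h.apply a).rank

theorem WellFounded.rank_eq {α : Type u} {r : α → α → Prop} (h : WellFounded r) (a : α) :
    h.rank a = ⨆ b : { b // r b a }, Order.succ (h.rank b) :=
  (h.apply a).rank_eq

theorem WellFounded.rank_lt_of_rel {α : Type u} {r : α → α → Prop} (h : WellFounded r) {a b : α}
    (hab : r a b) : h.rank a < h.rank b :=
  Acc.rank_lt_of_rel _ hab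



namespace CLIP
set_option linter.deprecated false
open Ordinal Order

/-- An "orbit system": each `E n` is an equivalence relation, decreasing in `n`. -/
structure OS {X : Type} (E : ℕ → X → X → Prop) : Prop where
  refl : ∀ n x, E n x x
  symm : ∀ {n x y}, E n x y → E n y x
  trans : ∀ {n x y z}, E n x y → E n y z → E n x z
  anti : ∀ {m n x y}, m ≤ n → E n x y → E m x y

variable {X : Type}

def cls (E : ℕ → X → X → Prop) (n : ℕ) (x : X) : Set X := {y | E n x y}

theorem mem_cls {E : ℕ → X → X → Prop} {n x y} : y ∈ cls E n x ↔ E n x y := Iff.rfl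

theorem OS.mem_cls_self {E : ℕ → X → X → Prop} (h : OS E) (n : ℕ) (x : X) :
    x ∈ cls E n x := h.refl n x

theorem OS.cls_eq {E : ℕ → X → X → Prop} (h : OS E) {n : ℕ} {x y : X}
    (hy : y ∈ cls E n x) : cls E n y = cls E n x := by
  ext z
  exact ⟨fun hz => h.trans hy hz, fun hz => h.trans (h.symm hy) hz⟩

theorem OS.cls_anti {E : ℕ → X → X → Prop} (h : OS E) {m n : ℕ} (hmn : m ≤ n) (x : X) :
    cls E n x ⊆ cls E m x := fun _ hz => h.anti hmn hz

/-- two distinct elements in any node's set, relative to any of its points -/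
theorem node_ne_singleton {E : ℕ → X → X → Prop} (h : OS E) (s : TreeNode X E)
    {x : X} (hx : x ∈ s.1.2) : s.1.2 ≠ {x} := by
  obtain ⟨w, hw, hwne⟩ := s.2
  intro hcontra
  -- s.1.2 = {x}; but also = cls of w with w ∈ it
  have hwmem : w ∈ s.1.2 := by rw [hw]; exact h.mem_cls_self _ _
  have hwx : w = x := by rw [hcontra] at hwmem; exact hwmem
  subst hwx
  exact hwne hcontra

theorem node_set_eq_cls {E : ℕ → X → X → Prop} (h : OS E) (s : TreeNode X E)
    {x : X} (hx : x ∈ s.1.2) : s.1.2 = cls E s.1.1 x := by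
  obtain ⟨w, hw, -⟩ := s.2
  rw [hw] at hx ⊢
  exact (h.cls_eq hx).symm

theorem node_exists_ne {E : ℕ → X → X → Prop} (h : OS E) (s : TreeNode X E)
    {x : X} (hx : x ∈ s.1.2) : ∃ y ∈ s.1.2, y ≠ x := by
  by_contra hcon
  push_neg at hcon
  exact node_ne_singleton h s hx (Set.eq_singleton_iff_unique_mem.2 ⟨hx, hcon⟩)

/-- make a node from a class containing two distinct points -/
theorem node_mk_ne {E : ℕ → X → X → Prop} (h : OS E) {n : ℕ} {x : X}
    (hne : cls E n x ≠ {x}) :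
    ∃ s : TreeNode X E, s.1.1 = n ∧ s.1.2 = cls E n x :=
  ⟨⟨(n, cls E n x), x, rfl, hne⟩, rfl, rfl⟩

/-! ### rank and rho lemmas -/

theorem rank_proof_irrel {T : Type u} {r : T → T → Prop} (h h' : WellFounded r) (s : T) :
    h.rank s = h'.rank s := by
  unfold WellFounded.rank
  exact congrArg Acc.rank (Subsingleton.elim _ _)

theorem treeRho_eq {E : ℕ → X → X → Prop} (h : TreeWF X E) :
    treeRho X E = ⨆ s : TreeNode X E, Order.succ (h.rank s) := by
  have h' : WellFounded (Function.swap (nodeLT E)) := h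
  rw [treeRho, rhoRel, dif_pos h']
  rfl

theorem rank_add_one_le_rho {E : ℕ → X → X → Prop} (h : TreeWF X E) (s : TreeNode X E) :
    h.rank s + 1 ≤ treeRho X E := by
  rw [treeRho_eq h]
  exact (Ordinal.le_iSup (fun s => Order.succ (h.rank s)) s)

theorem rho_le {E : ℕ → X → X → Prop} (h : TreeWF X E) {c : Ordinal}
    (hc : ∀ s, h.rank s + 1 ≤ c) : treeRho X E ≤ c := by
  rw [treeRho_eq h]
  exact Ordinal.iSup_le fun s => hc s

theorem rank_lt_rank {E : ℕ → X → X → Prop} (h : TreeWF X E) {s t : TreeNode X E}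
    (hst : nodeLT E s t) : h.rank t < h.rank s :=
  h.rank_lt_of_rel hst

theorem rank_le_of_children {E : ℕ → X → X → Prop} (h : TreeWF X E) {s : TreeNode X E}
    {c : Ordinal} (hc : ∀ t, nodeLT E s t → h.rank t + 1 ≤ c) : h.rank s ≤ c := by
  rw [h.rank_eq]
  exact Ordinal.iSup_le fun b => hc b.1 b.2

/-! ### strictly monotone maps of trees -/

theorem strictMap {X Y : Type} {E : ℕ → X → X → Prop} {F : ℕ → Y → Y → Prop}
    (h : TreeWF Y F) (Φ : TreeNode X E → TreeNode Y F)
    (hΦ : ∀ {s t}, nodeLT E s t → nodeLT F (Φ s) (Φ t)) :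
    TreeWF X E ∧ treeRho X E ≤ treeRho Y F := by
  have hwf : TreeWF X E := by
    have h1 : WellFounded (fun a b : TreeNode X E =>
        Function.swap (nodeLT F) (Φ a) (Φ b)) := InvImage.wf Φ h
    exact Subrelation.wf (fun {a b} hab => hΦ hab) h1
  refine ⟨hwf, ?_⟩
  have hrank : ∀ s, hwf.rank s ≤ h.rank (Φ s) := by
    intro s
    induction s using hwf.induction with
    | _ s IH =>
      refine rank_le_of_children hwf fun t hst => ?_
      have h1 : hwf.rank t ≤ h.rank (Φ t) := IH t hst
      have h2 : h.rank (Φ t) < h.rank (Φ s) := rank_lt_rank h (hΦ hst)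
      have := Order.add_one_le_iff.2 (lt_of_le_of_lt h1 h2)
      exact this
  refine rho_le hwf fun s => ?_
  calc hwf.rank s + 1 ≤ h.rank (Φ s) + 1 := by
        exact add_le_add_left (hrank s) 1
    _ ≤ treeRho Y F := rank_add_one_le_rho h (Φ s)

/-! ### transfer along a class-preserving surjection -/

section Transfer

variable {Z X : Type} {EZ : ℕ → Z → Z → Prop} {EX : ℕ → X → X → Prop}

def Match (F : Z → X) (s : TreeNode Z EZ) (d : TreeNode X EX) : Prop :=
  s.1.1 = d.1.1 ∧ F '' s.1.2 = d.1.2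

theorem match_node (hZ : OS EZ) (hX : OS EX) {F : Z → X}
    (hpush : ∀ n z, F '' cls EZ n z = cls EX n (F z))
    (d : TreeNode X EX) {z : Z} (hz : F z ∈ d.1.2) :
    ∃ s : TreeNode Z EZ, s.1.1 = d.1.1 ∧ s.1.2 = cls EZ d.1.1 z ∧ Match F s d := by
  have hset : d.1.2 = cls EX d.1.1 (F z) := node_set_eq_cls hX d hz
  have hp : F '' cls EZ d.1.1 z = d.1.2 := by rw [hpush, hset]
  have hne : cls EZ d.1.1 z ≠ {z} := by
    intro hcon
    have : d.1.2 = {F z} := by rw [← hp, hcon, Set.image_singleton]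
    exact node_ne_singleton hX d hz this
  exact ⟨⟨(d.1.1, cls EZ d.1.1 z), z, rfl, hne⟩, rfl, rfl, rfl, hp⟩

theorem liftChild (hZ : OS EZ) (hX : OS EX) {F : Z → X}
    (hpush : ∀ n z, F '' cls EZ n z = cls EX n (F z))
    {s : TreeNode Z EZ} {d d' : TreeNode X EX}
    (hm : Match F s d) (hdd' : nodeLT EX d d') :
    ∃ s', nodeLT EZ s s' ∧ Match F s' d' := by
  have hw' : ∃ w', w' ∈ d'.1.2 := by
    obtain ⟨x, hx, -⟩ := d'.2
    exact ⟨x, by rw [hx]; exact hX.mem_cls_self _ _⟩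
  obtain ⟨w', hw'⟩ := hw'
  have hw'd : w' ∈ d.1.2 := hdd'.2 hw'
  have : w' ∈ F '' s.1.2 := by rw [hm.2]; exact hw'd
  obtain ⟨w, hws, hFw⟩ := this
  obtain ⟨s', hlvl, hsset, hm'⟩ := match_node hZ hX hpush d' (by rw [hFw]; exact hw')
  refine ⟨s', ⟨?_, ?_⟩, hm'⟩
  · rw [hm.1, hlvl]; exact hdd'.1
  · rw [hsset, node_set_eq_cls hZ s hws]
    have h1 : s.1.1 ≤ d'.1.1 := by rw [hm.1]; exact le_of_lt hdd'.1
    exact hZ.cls_anti h1 w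

theorem transfer (hZ : OS EZ) (hX : OS EX) {F : Z → X}
    (hsurj : Function.Surjective F)
    (hpush : ∀ n z, F '' cls EZ n z = cls EX n (F z))
    (hwf : TreeWF Z EZ) : TreeWF X EX ∧ treeRho X EX ≤ treeRho Z EZ := by
  have hroot : ∀ d : TreeNode X EX, ∃ s : TreeNode Z EZ, Match F s d := by
    intro d
    obtain ⟨x, hx, -⟩ := d.2
    have hxd : x ∈ d.1.2 := by rw [hx]; exact hX.mem_cls_self _ _
    obtain ⟨z, rfl⟩ := hsurj x
    obtain ⟨s, -, -, hm⟩ := match_node hZ hX hpush d hxd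
    exact ⟨s, hm⟩
  have hacc : ∀ s : TreeNode Z EZ, ∀ d, Match F s d →
      Acc (Function.swap (nodeLT EX)) d := by
    intro s
    induction s using hwf.induction with
    | _ s IH =>
      intro d hm
      constructor
      intro d' hd'
      obtain ⟨s', hss', hm'⟩ := liftChild hZ hX hpush hm hd'
      exact IH s' hss' d' hm'
  have hwfX : TreeWF X EX := ⟨fun d => (hroot d).elim fun s hs => hacc s d hs⟩
  refine ⟨hwfX, ?_⟩
  have hrank : ∀ s : TreeNode Z EZ, ∀ d, Match F s d → hwfX.rank d ≤ hwf.rank s := by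
    intro s
    induction s using hwf.induction with
    | _ s IH =>
      intro d hm
      refine rank_le_of_children hwfX fun d' hdd' => ?_
      obtain ⟨s', hss', hm'⟩ := liftChild hZ hX hpush hm hdd'
      have h1 : hwfX.rank d' ≤ hwf.rank s' := IH s' hss' d' hm'
      have h2 : hwf.rank s' < hwf.rank s := rank_lt_rank hwf hss'
      exact Order.add_one_le_iff.2 (lt_of_le_of_lt h1 h2)
  refine rho_le hwfX fun d => ?_
  obtain ⟨s, hm⟩ := hroot d
  calc hwfX.rank d + 1 ≤ hwf.rank s + 1 := add_le_add_left (hrank s d hm) 1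
    _ ≤ treeRho Z EZ := rank_add_one_le_rho hwf s

end Transfer

/-! ### main comparison lemma -/

section Main

def gsum (M : ℕ → ℕ) (l j : ℕ) : ℕ := ∑ v ∈ Finset.Icc (l+1) (l+j), M (v+1)

theorem gsum_step (M : ℕ → ℕ) {b j b' j' : ℕ} (h1 : b+1 ≤ b') (h2 : b'+j' ≤ b+j) :
    gsum M b' j' + M (b'+1) ≤ gsum M b j := by
  unfold gsum
  rw [Finset.Icc_add_one_left_eq_Ioc]
  have hnm : b' ∉ Finset.Ioc b' (b'+j') := Finset.left_notMem_Ioc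
  have he : M (b'+1) + ∑ v ∈ Finset.Ioc b' (b'+j'), M (v+1)
      = ∑ v ∈ Finset.Icc b' (b'+j'), M (v+1) := by
    rw [← Finset.Ioc_insert_left (Nat.le_add_right b' j'), Finset.sum_insert hnm]
  rw [add_comm, he]
  exact Finset.sum_le_sum_of_subset (Finset.Icc_subset_Icc h1 h2)

theorem gsum_le (M : ℕ → ℕ) {b j r : ℕ} (h : b + j ≤ r) :
    gsum M b j ≤ ∑ v ∈ Finset.range (r+1), M (v+1) := by
  apply Finset.sum_le_sum_of_subset
  intro v hv
  rw [Finset.mem_Icc] at hv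
  rw [Finset.mem_range]
  omega

/-- the natural-number remainder of an ordinal mod ω -/
def omod (o : Ordinal) : ℕ :=
  (Ordinal.lt_omega0.1 (Ordinal.mod_lt o Ordinal.omega0_ne_zero)).choose

theorem omod_spec (o : Ordinal) :
    o = Ordinal.omega0 * (o / Ordinal.omega0) + omod o := by
  have h := (Ordinal.lt_omega0.1 (Ordinal.mod_lt o Ordinal.omega0_ne_zero)).choose_spec
  calc o = Ordinal.omega0 * (o / Ordinal.omega0) + o % Ordinal.omega0 :=
        (Ordinal.div_add_mod o Ordinal.omega0).symm
    _ = _ := by rw [h]; rfl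

theorem ocast (x : Ordinal) (k : ℕ) : x + (k:Ordinal) + 1 = x + ((k+1 : ℕ) : Ordinal) := by
  rw [add_assoc]; norm_num

theorem ole {x β : Ordinal} {a b : ℕ} (h1 : x ≤ Ordinal.omega0 * β + (a:Ordinal))
    (h2 : a + 1 ≤ b) : x + 1 ≤ Ordinal.omega0 * β + (b:Ordinal) := by
  calc x + 1 ≤ (Ordinal.omega0 * β + (a:Ordinal)) + 1 := add_le_add_left h1 1
    _ = Ordinal.omega0 * β + ((a+1 : ℕ) : Ordinal) := ocast _ a
    _ ≤ _ := add_le_add_right (Nat.cast_le.2 h2) _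

theorem osmall {β α : Ordinal} (hβ : β < α) (k : ℕ) :
    Ordinal.omega0 * β + (k:Ordinal) + 1 ≤ Ordinal.omega0 * α := by
  rw [ocast]
  have h1 : Ordinal.omega0 * β + ((k+1:ℕ) : Ordinal) < Ordinal.omega0 * β + Ordinal.omega0 :=
    add_lt_add_right (Ordinal.nat_lt_omega0 (k+1)) _
  have h2 : Ordinal.omega0 * β + Ordinal.omega0 = Ordinal.omega0 * (β + 1) :=
    (mul_add_one Ordinal.omega0 β).symm
  have h3 : Ordinal.omega0 * (β + 1) ≤ Ordinal.omega0 * α :=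
    mul_le_mul_right (Order.add_one_le_iff.2 hβ) _
  exact le_of_lt (lt_of_lt_of_le (h1.trans_le h2.le) h3)

variable {X : Type} {EG : ℕ → X → X → Prop}

/-- interpolation: ranks in an orbit tree drop at least linearly in the level gap. -/
theorem interp (hG : OS EG) (hwfG : TreeWF X EG) :
    ∀ d : ℕ, ∀ s t : TreeNode X EG, nodeLT EG s t → s.1.1 + d ≤ t.1.1 →
      hwfG.rank t + (d:Ordinal) ≤ hwfG.rank s := by
  intro d
  induction d with
  | zero =>
    intro s t h _
    simpa using (le_of_lt (rank_lt_rank hwfG h))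
  | succ d IH =>
    intro s t h hlvl
    by_cases hgap : s.1.1 + 1 < t.1.1
    · -- build intermediate node at level t.1.1 - 1
      obtain ⟨x, hx, -⟩ := t.2
      have hxt : x ∈ t.1.2 := by rw [hx]; exact hG.mem_cls_self _ _
      have htset : t.1.2 = cls EG t.1.1 x := node_set_eq_cls hG t hxt
      have hsub : t.1.2 ⊆ cls EG (t.1.1 - 1) x := by
        rw [htset]; exact hG.cls_anti (Nat.sub_le _ _) x
      have hne : cls EG (t.1.1 - 1) x ≠ {x} := by
        intro hcon
        obtain ⟨y, hy, hyne⟩ := node_exists_ne hG t hxt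
        have := hsub hy
        rw [hcon] at this
        exact hyne this
      obtain ⟨u, hu1, hu2⟩ := node_mk_ne hG hne
      have hut : nodeLT EG u t := ⟨by rw [hu1]; omega, by rw [hu2]; exact hsub⟩
      have hsu : nodeLT EG s u := by
        refine ⟨by rw [hu1]; omega, ?_⟩
        rw [hu2, node_set_eq_cls hG s (h.2 hxt)]
        exact hG.cls_anti (by omega) x
      have h1 : hwfG.rank u + (d:Ordinal) ≤ hwfG.rank s := IH s u hsu (by rw [hu1]; omega)
      have h2 : hwfG.rank t + 1 ≤ hwfG.rank u := Order.add_one_le_iff.2 (rank_lt_rank hwfG hut)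
      calc hwfG.rank t + ((d+1 : ℕ):Ordinal) = hwfG.rank t + (1 + (d:Ordinal)) := by
            rw [show (d+1 : ℕ) = 1 + d from Nat.add_comm d 1, Nat.cast_add, Nat.cast_one]
        _ = (hwfG.rank t + 1) + (d:Ordinal) := by rw [add_assoc]
        _ ≤ hwfG.rank u + (d:Ordinal) := add_le_add_left h2 _
        _ ≤ hwfG.rank s := h1
    · -- gap is exactly one, so d = 0
      have hd : d = 0 := by omega
      subst hd
      have : hwfG.rank t + 1 ≤ hwfG.rank s := Order.add_one_le_iff.2 (rank_lt_rank hwfG h)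
      simpa using this

/-- a node at level l has rank + l + 1 below the tree rank -/
theorem rootBound (hG : OS EG) (hwfG : TreeWF X EG) (s : TreeNode X EG) :
    hwfG.rank s + ((s.1.1 + 1 : ℕ) : Ordinal) ≤ treeRho X EG := by
  by_cases h0 : s.1.1 = 0
  · rw [h0]
    simpa using rank_add_one_le_rho hwfG s
  · obtain ⟨x, hx, -⟩ := s.2
    have hxs : x ∈ s.1.2 := by rw [hx]; exact hG.mem_cls_self _ _
    have hsset : s.1.2 = cls EG s.1.1 x := node_set_eq_cls hG s hxs
    have hsub : s.1.2 ⊆ cls EG 0 x := by rw [hsset]; exact hG.cls_anti (Nat.zero_le _) x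
    have hne : cls EG 0 x ≠ {x} := by
      intro hcon
      obtain ⟨y, hy, hyne⟩ := node_exists_ne hG s hxs
      have := hsub hy
      rw [hcon] at this
      exact hyne this
    obtain ⟨u, hu1, hu2⟩ := node_mk_ne hG hne
    have hus : nodeLT EG u s := ⟨by omega, by rw [hu2]; exact hsub⟩
    have h1 : hwfG.rank s + (s.1.1 : Ordinal) ≤ hwfG.rank u :=
      interp hG hwfG s.1.1 u s hus (by omega)
    calc hwfG.rank s + ((s.1.1 + 1:ℕ) : Ordinal)
        = (hwfG.rank s + (s.1.1:Ordinal)) + 1 := by rw [ocast]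
      _ ≤ hwfG.rank u + 1 := add_le_add_left h1 1
      _ ≤ treeRho X EG := rank_add_one_le_rho hwfG u

theorem main {EQ : ℕ → X → X → Prop}
    (hQ : OS EQ) (hG : OS EG)
    (h0 : ∀ n x y, EQ n x y → EG 0 x y)
    (hsing : ∀ x : X, ∃ n, ∀ y, EG n x y → y = x)
    (hMex : ∀ b : ℕ, ∃ m, ∀ x y, EQ m x y → EG b x y)
    (hwfG : TreeWF X EG) :
    TreeWF X EQ ∧
      (∀ α : Ordinal, treeRho X EG ≤ Ordinal.omega0 * α →
        treeRho X EQ ≤ Ordinal.omega0 * α) ∧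
      ∃ B : ℕ, treeRho X EQ ≤
        Ordinal.omega0 * (treeRho X EG / Ordinal.omega0) + (B : Ordinal) := by
  classical
  choose M hMs using hMex
  -- base point of a Q-node
  let ξ : TreeNode X EQ → X := fun sh => sh.2.choose
  have hξ : ∀ sh : TreeNode X EQ, sh.1.2 = cls EQ sh.1.1 (ξ sh) ∧ sh.1.2 ≠ {ξ sh} :=
    fun sh => sh.2.choose_spec
  have hξmem : ∀ sh, ξ sh ∈ sh.1.2 := by
    intro sh; rw [(hξ sh).1]; exact hQ.mem_cls_self _ _
  -- the level function b
  have flip : ∀ P : ℕ → Prop, P 0 → (∃ n, ¬ P n) → ∃ b, P b ∧ ¬ P (b+1) := by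
    intro P hP0 ⟨n, hn⟩
    induction n with
    | zero => exact absurd hP0 hn
    | succ k IH =>
      by_cases hk : P k
      · exact ⟨k, hk, hn⟩
      · exact IH hk
  have hbex : ∀ sh : TreeNode X EQ,
      ∃ b, sh.1.2 ⊆ cls EG b (ξ sh) ∧ ¬ sh.1.2 ⊆ cls EG (b+1) (ξ sh) := by
    intro sh
    refine flip _ ?_ ?_
    · intro x hxmem
      have : EQ sh.1.1 (ξ sh) x := by
        have := hxmem; rw [(hξ sh).1] at this; exact this
      exact h0 _ _ _ this
    · obtain ⟨n, hn⟩ := hsing (ξ sh)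
      refine ⟨n, fun hsub => ?_⟩
      obtain ⟨y, hy, hyne⟩ := node_exists_ne hQ sh (hξmem sh)
      exact hyne (hn y (hsub hy))
  choose bf hb1 hb2 using hbex
  -- the G-node associated to a Q-node
  have hΦex : ∀ sh : TreeNode X EQ, ∃ s : TreeNode X EG,
      s.1.1 = bf sh ∧ s.1.2 = cls EG (bf sh) (ξ sh) := by
    intro sh
    refine node_mk_ne hG ?_
    intro hcon
    obtain ⟨y, hy, hyne⟩ := node_exists_ne hQ sh (hξmem sh)
    have := hb1 sh hy
    rw [hcon] at this
    exact hyne this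
  choose Φ hΦ1 hΦ2 using hΦex
  -- stall bound
  have hstall : ∀ sh, sh.1.1 < M (bf sh + 1) := by
    intro sh
    by_contra hcon
    push_neg at hcon
    refine hb2 sh ?_
    intro x hxmem
    have h1 : EQ sh.1.1 (ξ sh) x := by rw [(hξ sh).1] at hxmem; exact hxmem
    exact hMs _ _ _ (hQ.anti hcon h1)
  -- key monotonicity dichotomy
  have hkey : ∀ {sh th : TreeNode X EQ}, nodeLT EQ sh th →
      (bf th = bf sh ∧ Φ th = Φ sh) ∨ (bf sh < bf th ∧ nodeLT EG (Φ sh) (Φ th)) := by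
    intro sh th h
    have hmem : ξ th ∈ cls EG (bf sh) (ξ sh) := hb1 sh (h.2 (hξmem th))
    have hcls : cls EG (bf sh) (ξ th) = cls EG (bf sh) (ξ sh) := hG.cls_eq hmem
    have hsub : th.1.2 ⊆ cls EG (bf sh) (ξ th) := by
      rw [hcls]; exact fun x hx => hb1 sh (h.2 hx)
    have hble : bf sh ≤ bf th := by
      by_contra hlt
      push_neg at hlt
      exact hb2 th (hsub.trans (hG.cls_anti hlt (ξ th)))
    rcases eq_or_lt_of_le hble with heq | hlt
    · left
      refine ⟨heq.symm, ?_⟩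
      apply Subtype.ext
      apply Prod.ext
      · rw [hΦ1, hΦ1, heq]
      · rw [hΦ2, hΦ2, ← heq, hcls]
    · right
      refine ⟨hlt, ⟨by rw [hΦ1, hΦ1]; exact hlt, ?_⟩⟩
      rw [hΦ2, hΦ2]
      calc cls EG (bf th) (ξ th) ⊆ cls EG (bf sh) (ξ th) := hG.cls_anti (le_of_lt hlt) _
        _ = cls EG (bf sh) (ξ sh) := hcls
  -- well-foundedness of the Q-tree
  have hwfQ : TreeWF X EQ := by
    have hlex : WellFounded (Prod.Lex ((· < ·) : Ordinal → Ordinal → Prop)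
        ((· < ·) : ℕ → ℕ → Prop)) := WellFounded.prod_lex Ordinal.lt_wf Nat.lt_wfRel.wf
    have hinv := InvImage.wf
      (fun sh : TreeNode X EQ => ((hwfG.rank (Φ sh), M (bf sh + 1) - 1 - sh.1.1) : Ordinal × ℕ))
      hlex
    refine Subrelation.wf ?_ hinv
    intro th sh h
    simp only [InvImage]
    rcases hkey h with ⟨hbeq, hfeq⟩ | ⟨hblt, hflt⟩
    · rw [hfeq, hbeq]
      refine Prod.Lex.right _ ?_
      have h1 := hstall th
      rw [hbeq] at h1
      have h2 : sh.1.1 < th.1.1 := h.1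
      omega
    · exact Prod.Lex.left _ _ (rank_lt_rank hwfG hflt)
  refine ⟨hwfQ, ?_⟩
  -- the central rank bound
  have claim : ∀ sh : TreeNode X EQ, hwfQ.rank sh ≤
      Ordinal.omega0 * (hwfG.rank (Φ sh) / Ordinal.omega0) +
        ((gsum M (bf sh) (omod (hwfG.rank (Φ sh))) + (M (bf sh + 1) - 1 - sh.1.1) : ℕ) : Ordinal) := by
    intro sh
    induction sh using hwfQ.induction with
    | _ sh IH =>
      refine rank_le_of_children hwfQ fun th h => ?_
      have IHt := IH th h
      rcases hkey h with ⟨hbeq, hfeq⟩ | ⟨hblt, hflt⟩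
      · rw [hfeq, hbeq] at IHt
        refine ole IHt ?_
        have h1 := hstall th
        rw [hbeq] at h1
        have h2 : sh.1.1 < th.1.1 := h.1
        have h3 := hstall sh
        omega
      · -- advance case
        have hlt := rank_lt_rank hwfG hflt
        have hβle : hwfG.rank (Φ th) / Ordinal.omega0 ≤ hwfG.rank (Φ sh) / Ordinal.omega0 :=
          Ordinal.div_le_left (le_of_lt hlt) _
        rcases lt_or_eq_of_le hβle with hβlt | hβeq
        · exact le_trans (add_le_add_left IHt 1) (le_trans (osmall hβlt _)
            le_self_add)
        · -- same ω-part
          have hint : hwfG.rank (Φ th) + ((bf th - bf sh : ℕ) : Ordinal) ≤ hwfG.rank (Φ sh) := by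
            refine interp hG hwfG (bf th - bf sh) (Φ sh) (Φ th) hflt ?_
            rw [hΦ1, hΦ1]
            omega
          have hj : omod (hwfG.rank (Φ th)) + (bf th - bf sh) ≤ omod (hwfG.rank (Φ sh)) := by
            have e1 := omod_spec (hwfG.rank (Φ th))
            have e2 := omod_spec (hwfG.rank (Φ sh))
            rw [e1, e2, hβeq, add_assoc, ← Nat.cast_add] at hint
            have := (add_le_add_iff_left
              (Ordinal.omega0 * (hwfG.rank (Φ sh) / Ordinal.omega0))).1 hint
            exact_mod_cast this
          rw [hβeq] at IHt
          refine ole IHt ?_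
          have h1 := hstall th
          have h2 := gsum_step M (b := bf sh) (j := omod (hwfG.rank (Φ sh)))
            (b' := bf th) (j' := omod (hwfG.rank (Φ th))) (by omega) (by omega)
          omega
  constructor
  · -- alpha bound
    intro α hα
    refine rho_le hwfQ fun sh => ?_
    have h1 : hwfG.rank (Φ sh) < Ordinal.omega0 * α :=
      Order.add_one_le_iff.1 ((rank_add_one_le_rho hwfG (Φ sh)).trans hα)
    have hβ : hwfG.rank (Φ sh) / Ordinal.omega0 < α :=
      (Ordinal.div_lt Ordinal.omega0_ne_zero).2 h1
    exact le_trans (add_le_add_left (claim sh) 1) (osmall hβ _)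
  · -- omega-part bound
    set ρG := treeRho X EG with hρG
    set β := ρG / Ordinal.omega0 with hβdef
    set r := omod ρG with hrdef
    set S := ∑ v ∈ Finset.range (r+1), M (v+1) with hSdef
    refine ⟨2*S+1, rho_le hwfQ fun sh => ?_⟩
    have h1 : hwfG.rank (Φ sh) + 1 ≤ ρG := rank_add_one_le_rho hwfG (Φ sh)
    have h2 : hwfG.rank (Φ sh) ≤ ρG := le_of_lt (Order.add_one_le_iff.1 h1)
    have hβle : hwfG.rank (Φ sh) / Ordinal.omega0 ≤ β := Ordinal.div_le_left h2 _
    rcases lt_or_eq_of_le hβle with hβlt | hβeq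
    · exact le_trans (add_le_add_left (claim sh) 1)
        (le_trans (osmall hβlt _) le_self_add)
    · -- the ω-parts agree; use the root bound
      have hroot : hwfG.rank (Φ sh) + (((Φ sh).1.1 + 1 : ℕ) : Ordinal) ≤ ρG :=
        rootBound hG hwfG (Φ sh)
      have hjb : omod (hwfG.rank (Φ sh)) + (bf sh + 1) ≤ r := by
        have e1 := omod_spec (hwfG.rank (Φ sh))
        have e2 := omod_spec ρG
        rw [e1, hβeq, hΦ1] at hroot
        rw [e2, ← hβdef, ← hrdef] at hroot
        rw [add_assoc, ← Nat.cast_add] at hroot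
        have := (add_le_add_iff_left (Ordinal.omega0 * β)).1 hroot
        exact_mod_cast this
      have hKB : (gsum M (bf sh) (omod (hwfG.rank (Φ sh))) + (M (bf sh + 1) - 1 - sh.1.1)) + 1
          ≤ 2*S+1 := by
        have hg : gsum M (bf sh) (omod (hwfG.rank (Φ sh))) ≤ S := by
          rw [hSdef]
          exact gsum_le M (by omega)
        have hMb : M (bf sh + 1) ≤ S := by
          rw [hSdef]
          refine Finset.single_le_sum (f := fun v => M (v+1)) (fun i _ => Nat.zero_le _) ?_
          rw [Finset.mem_range]
          omega
        omega
      have hcl := claim sh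
      rw [hβeq] at hcl
      exact ole hcl hKB

end Main

/-! ### group instantiation -/

section Groups

theorem dgnb_anti {G : Type} [Group G] [TopologicalSpace G]
    (hseq : ℕ → Subgroup G) (h : ∀ n, hseq (n+1) ≤ hseq n) :
    ∀ {i j : ℕ}, i ≤ j → hseq j ≤ hseq i := by
  intro i j hij
  induction j, hij using Nat.le_induction with
  | base => exact le_rfl
  | succ j hj IH => exact le_trans (h j) IH

def sigRel {G : Type} [Group G] (S : ℕ → Subgroup G) (F : ℕ → Type)
    [∀ k, MulAction G (F k)] : ℕ → (Σ k, F k) → (Σ k, F k) → Prop :=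
  fun n p q => ∃ g ∈ S n, q = ⟨p.1, g • p.2⟩

theorem os_sigRel {G : Type} [Group G] (S : ℕ → Subgroup G) (F : ℕ → Type)
    [∀ k, MulAction G (F k)] (hanti : ∀ {i j : ℕ}, i ≤ j → S j ≤ S i) :
    OS (sigRel S F) := by
  constructor
  · intro n x
    exact ⟨1, one_mem _, by rw [one_smul]⟩
  · rintro n x y ⟨g, hg, rfl⟩
    exact ⟨g⁻¹, inv_mem hg, by rw [inv_smul_smul]⟩
  · rintro n x y z ⟨g, hg, rfl⟩ ⟨g', hg', rfl⟩
    exact ⟨g' * g, mul_mem hg' hg, by rw [mul_smul]⟩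
  · rintro m n x y hmn ⟨g, hg, rfl⟩
    exact ⟨g, hanti hmn hg, rfl⟩

theorem sig_fiber {F : ℕ → Type} {k : ℕ} :
    ∀ q : Σ i, F i, q.1 = k → ∃ z : F k, q = ⟨k, z⟩ := by
  rintro ⟨a, b⟩ h
  subst h
  exact ⟨b, rfl⟩

theorem sig_snd_inj {F : ℕ → Type} {k : ℕ} {a b : F k}
    (h : (⟨k, a⟩ : Σ i, F i) = ⟨k, b⟩) : a = b := by
  simpa using h

theorem smulset_open {G : Type} [Group G] [TopologicalSpace G] [IsTopologicalGroup G]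
    (K : Subgroup G) (hK : IsOpen (K : Set G)) (t t' : G ⧸ K) :
    IsOpen {g : G | g • t = t'} := by
  obtain ⟨c, rfl⟩ := QuotientGroup.mk_surjective t
  obtain ⟨c', rfl⟩ := QuotientGroup.mk_surjective t'
  have he : {g : G | g • ((c : G ⧸ K)) = (c' : G ⧸ K)}
      = (fun g => (g * c)⁻¹ * c') ⁻¹' (K : Set G) := by
    ext g
    simp only [Set.mem_setOf_eq, Set.mem_preimage, SetLike.mem_coe]
    rw [MulAction.Quotient.smul_mk, QuotientGroup.eq, _root_.smul_eq_mul]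
  rw [he]
  exact hK.preimage (by continuity)


/-- purely metric part: the inverse-product sequence converges -/
theorem cauchy_limit_aux {G : Type} [Group G] (m : MetricSpace G)
    (hmcompl : @CompleteSpace G m.toUniformSpace)
    (hminv : ∀ g h k : G, m.dist (g * h) (g * k) = m.dist h k)
    (T : ℕ → Subgroup G) (hanti : ∀ {i j : ℕ}, i ≤ j → T j ≤ T i)
    (gs : ℕ → G) (hgs : ∀ n, gs n ∈ T n)
    (hball : ∀ ε : ℝ, 0 < ε → ∃ nn, ∀ x ∈ T nn, m.dist x 1 < ε) :
    ∃ L : G, Filter.Tendsto (fun n => (Nat.rec 1 (fun i acc => acc * (gs i)⁻¹) n : G))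
      Filter.atTop (@nhds G m.toUniformSpace.toTopologicalSpace L) := by
  letI : MetricSpace G := m
  haveI : CompleteSpace G := hmcompl
  set Qs : ℕ → G := fun n => Nat.rec 1 (fun i acc => acc * (gs i)⁻¹) n with hQsdef
  have hQsS : ∀ i, Qs (i+1) = Qs i * (gs i)⁻¹ := fun i => rfl
  have hprod : ∀ i j, i ≤ j → ∃ rr ∈ T i, Qs j = Qs i * rr := by
    intro i j hij
    induction j, hij using Nat.le_induction with
    | base => exact ⟨1, one_mem _, by rw [mul_one]⟩
    | succ j hj IH =>
      obtain ⟨rr, hrr, heq⟩ := IH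
      refine ⟨rr * (gs j)⁻¹, mul_mem hrr (inv_mem (hanti hj (hgs j))),
        by rw [hQsS, heq, mul_assoc]⟩
  have hcauchy : CauchySeq Qs := by
    rw [Metric.cauchySeq_iff']
    intro ε hε
    obtain ⟨nn, hnn⟩ := hball ε hε
    refine ⟨nn, fun n hn => ?_⟩
    obtain ⟨rr, hrr, heq⟩ := hprod nn n hn
    show m.dist (Qs n) (Qs nn) < ε
    calc m.dist (Qs n) (Qs nn) = m.dist (Qs nn * rr) (Qs nn * 1) := by
          rw [heq, mul_one]
      _ = m.dist rr 1 := hminv _ _ _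
      _ < ε := hnn rr hrr
  exact cauchySeq_tendsto_of_complete hcauchy

/-- CLI implies that the orbit tree of a dgnb on its associated Σ-space is well-founded. -/
theorem wf_dgnb {G : Type} [Group G] [TopologicalSpace G] [IsTopologicalGroup G]
    (hcli : IsCLI G) (𝒢 : Dgnb G) :
    TreeWF (Σ k, G ⧸ 𝒢.seq k) (sigRel 𝒢.seq (fun k => G ⧸ 𝒢.seq k)) := by
  set F : ℕ → Type := fun k => G ⧸ 𝒢.seq k with hF
  set E := sigRel 𝒢.seq F with hE
  have osig : OS E := os_sigRel _ _ (dgnb_anti 𝒢.seq 𝒢.antitone)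
  by_contra hwf
  rw [TreeWF] at hwf
  haveI : IsIrrefl (TreeNode (Σ k, F k) E) (Function.swap (nodeLT E)) :=
    ⟨fun a h => lt_irrefl a.1.1 h.1⟩
  haveI : IsTrans (TreeNode (Σ k, F k) E) (Function.swap (nodeLT E)) :=
    ⟨fun a b c hab hbc => ⟨lt_trans hbc.1 hab.1, hab.2.trans hbc.2⟩⟩
  haveI : IsStrictOrder (TreeNode (Σ k, F k) E) (Function.swap (nodeLT E)) := ⟨⟩
  rw [RelEmbedding.wellFounded_iff_isEmpty, not_isEmpty_iff] at hwf
  obtain ⟨femb⟩ := hwf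
  set c : ℕ → TreeNode (Σ k, F k) E := fun n => femb n with hcdef
  have hc : ∀ n, nodeLT E (c n) (c (n+1)) := fun n => femb.map_rel_iff.2 (Nat.lt_succ_self n)
  -- base points
  set p : ℕ → Σ k, F k := fun n => (c n).2.choose with hpdef
  have hpspec : ∀ n, (c n).1.2 = cls E (c n).1.1 (p n) ∧ (c n).1.2 ≠ {p n} :=
    fun n => (c n).2.choose_spec
  have hpmem : ∀ n, p n ∈ (c n).1.2 := by
    intro n
    rw [(hpspec n).1]
    exact osig.mem_cls_self _ _
  have hpnext : ∀ n, E (c n).1.1 (p n) (p (n+1)) := by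
    intro n
    have h1 : p (n+1) ∈ (c n).1.2 := (hc n).2 (hpmem (n+1))
    rw [(hpspec n).1] at h1
    exact h1
  choose gs hgs1 hgs2 using hpnext
  have hcomp : ∀ n, (p n).1 = (p 0).1 := by
    intro n
    induction n with
    | zero => rfl
    | succ n IH => rw [hgs2 n]; exact IH
  choose z hz using fun n => sig_fiber (p n) (hcomp n)
  have hzs : ∀ n, z (n+1) = gs n • z n := by
    intro n
    have h1 := hgs2 n
    rw [hz n, hz (n+1)] at h1
    exact sig_snd_inj h1
  -- nonsingleton witnesses
  have hex : ∀ n, ∃ hh ∈ 𝒢.seq (c n).1.1, hh • z n ≠ z n := by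
    intro n
    obtain ⟨v, hv, hvne⟩ := node_exists_ne osig (c n) (hpmem n)
    rw [(hpspec n).1] at hv
    obtain ⟨hh, hmem, hveq⟩ := hv
    refine ⟨hh, hmem, fun hcon => ?_⟩
    apply hvne
    rw [hveq, hz n]
    have : (⟨(p 0).1, hh • z n⟩ : Σ k, F k) = ⟨(p 0).1, z n⟩ := by rw [hcon]
    rw [this, ← hz n]
  choose hs hhs1 hhs2 using hex
  -- levels
  set lvl : ℕ → ℕ := fun n => (c n).1.1 with hlvldef
  have hlvlmono : ∀ n, lvl n < lvl (n+1) := fun n => (hc n).1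
  have hlvlle : ∀ n, n ≤ lvl n := by
    intro n
    induction n with
    | zero => exact Nat.zero_le _
    | succ n IH => have := hlvlmono n; omega
  have hmono : ∀ i j, i ≤ j → lvl i ≤ lvl j := by
    intro i j hij
    induction j, hij using Nat.le_induction with
    | base => exact le_rfl
    | succ j hj IH => exact le_trans IH (le_of_lt (hlvlmono j))
  -- the metric
  obtain ⟨m, hmtop, hmcompl, hminv⟩ := hcli
  have hball : ∀ ε : ℝ, 0 < ε → ∃ nn, ∀ x : G, x ∈ 𝒢.seq nn → m.dist x 1 < ε := by
    intro ε hε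
    have h1 : @IsOpen G m.toUniformSpace.toTopologicalSpace
        (@Metric.ball G m.toPseudoMetricSpace 1 ε) :=
      @Metric.isOpen_ball G m.toPseudoMetricSpace 1 ε
    rw [hmtop] at h1
    have h2 : (1:G) ∈ @Metric.ball G m.toPseudoMetricSpace 1 ε := by
      have : m.dist 1 1 < ε := by rw [m.dist_self]; exact hε
      exact this
    obtain ⟨nn, hnn⟩ := 𝒢.basis _ (h1.mem_nhds h2)
    exact ⟨nn, fun x hx => hnn hx⟩
  have hball' : ∀ ε : ℝ, 0 < ε → ∃ nn, ∀ x ∈ 𝒢.seq (lvl nn), m.dist x 1 < ε := by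
    intro ε hε
    obtain ⟨nn, hnn⟩ := hball ε hε
    exact ⟨nn, fun x hx =>
      hnn x (dgnb_anti 𝒢.seq 𝒢.antitone (hlvlle nn) hx)⟩
  obtain ⟨L, hL⟩ := cauchy_limit_aux m hmcompl hminv (fun n => 𝒢.seq (lvl n))
    (fun {i j} hij => dgnb_anti 𝒢.seq 𝒢.antitone (hmono i j hij)) gs hgs1 hball'
  rw [hmtop] at hL
  set Qs : ℕ → G := fun n => Nat.rec 1 (fun i acc => acc * (gs i)⁻¹) n with hQsdef
  have hQsS : ∀ i, Qs (i+1) = Qs i * (gs i)⁻¹ := fun i => rfl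
  have hPs : Filter.Tendsto (fun i => (Qs i)⁻¹) Filter.atTop (nhds L⁻¹) := hL.inv
  have hz0 : ∀ i, z i = (Qs i)⁻¹ • z 0 := by
    intro i
    induction i with
    | zero => rw [show Qs 0 = 1 from rfl, inv_one, one_smul]
    | succ i IH =>
      rw [hzs i, IH, hQsS i, mul_inv_rev, inv_inv, mul_smul]
  set zc : F (p 0).1 := L⁻¹ • z 0 with hzcdef
  have hUopen : IsOpen {g : G | g • z 0 = zc} := smulset_open _ (𝒢.isOpen _) _ _
  have hLU : L⁻¹ ∈ {g : G | g • z 0 = zc} := rfl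
  have hev : ∀ᶠ i in Filter.atTop, (Qs i)⁻¹ ∈ {g : G | g • z 0 = zc} :=
    Filter.mem_map.1 (hPs (hUopen.mem_nhds hLU))
  obtain ⟨I, hI⟩ := Filter.eventually_atTop.1 hev
  have hzconst : ∀ i, I ≤ i → z i = zc := by
    intro i hi
    rw [hz0 i]
    exact hI i hi
  have hUc : IsOpen {g : G | g • zc = zc} := smulset_open _ (𝒢.isOpen _) _ _
  have h1Uc : (1:G) ∈ {g : G | g • zc = zc} := one_smul _ _
  obtain ⟨nn2, hnn2⟩ := 𝒢.basis _ (hUc.mem_nhds h1Uc)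
  set i := max I nn2 with hidef
  have hzi : z i = zc := hzconst i (le_max_left _ _)
  have hmem2 : hs i ∈ 𝒢.seq nn2 := by
    refine dgnb_anti 𝒢.seq 𝒢.antitone ?_ (hhs1 i)
    exact le_trans (le_max_right I nn2) (hlvlle i)
  have : hs i • zc = zc := hnn2 hmem2
  apply hhs2 i
  rw [hzi]
  exact this

end Groups

/-! ### omegaPart lemmas -/

section OmegaPart

theorem omegaPart_bddAbove (a : Ordinal) :
    BddAbove {b : Ordinal | (b = 0 ∨ Order.IsSuccLimit b) ∧ b ≤ a} :=
  ⟨a, fun _ hx => hx.2⟩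

theorem omegaPart_nonempty (a : Ordinal) :
    {b : Ordinal | (b = 0 ∨ Order.IsSuccLimit b) ∧ b ≤ a}.Nonempty :=
  ⟨0, Or.inl rfl, zero_le (a := a)⟩

theorem le_omegaPart {b a : Ordinal} (hb : b = 0 ∨ Order.IsSuccLimit b) (h : b ≤ a) :
    b ≤ omegaPart a :=
  le_csSup (omegaPart_bddAbove a) ⟨hb, h⟩

theorem limit_le_of_le_add_nat : ∀ (k : ℕ) {b c : Ordinal}, (b = 0 ∨ Order.IsSuccLimit b) →
    b ≤ c + (k : Ordinal) → b ≤ c := by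
  intro k
  induction k with
  | zero => intro b c _ h; simpa using h
  | succ k IH =>
    intro b c hb h
    rcases hb with rfl | hb
    · exact zero_le (a := c)
    · by_cases hle : b ≤ c + (k : Ordinal)
      · exact IH (Or.inr hb) hle
      · exfalso
        push_neg at hle
        have h1 : b ≤ (c + (k:Ordinal)) + 1 := by
          rw [add_assoc]
          exact_mod_cast h
        have h2 : b = (c + (k:Ordinal)) + 1 := le_antisymm h1 (Order.add_one_le_iff.2 hle)
        have h3 := hb.succ_lt hle
        rw [Ordinal.add_one_eq_succ] at h2
        rw [← h2] at h3
        exact lt_irrefl b h3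
    
theorem omegaPart_le_mul {a β : Ordinal} {k : ℕ} (h : a ≤ Ordinal.omega0 * β + (k:Ordinal)) :
    omegaPart a ≤ Ordinal.omega0 * β := by
  apply csSup_le (omegaPart_nonempty a)
  intro x hx
  exact limit_le_of_le_add_nat k hx.1 (hx.2.trans h)

theorem omega_mul_zero_or_limit (β : Ordinal) :
    Ordinal.omega0 * β = 0 ∨ Order.IsSuccLimit (Ordinal.omega0 * β) := by
  rcases eq_or_ne β 0 with rfl | hβ
  · left; rw [mul_zero]
  · right
    exact Ordinal.isSuccLimit_mul_left Ordinal.isSuccLimit_omega0 (pos_iff_ne_zero.2 hβ)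

end OmegaPart

/-! ### strict map along an injective-on-classes embedding -/

theorem strictMap_of_map {X Y : Type} {E : ℕ → X → X → Prop} {F : ℕ → Y → Y → Prop}
    (hE : OS E) (hF : OS F) (ι : X → Y)
    (hiff : ∀ n x x', E n x x' ↔ F n (ι x) (ι x'))
    (hinj : ∀ {n x y}, E n x y → ι y = ι x → y = x)
    (hwf : TreeWF Y F) : TreeWF X E ∧ treeRho X E ≤ treeRho Y F := by
  classical
  let ξ : TreeNode X E → X := fun s => s.2.choose
  have hξ : ∀ s : TreeNode X E, s.1.2 = cls E s.1.1 (ξ s) ∧ s.1.2 ≠ {ξ s} :=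
    fun s => s.2.choose_spec
  have hξmem : ∀ s, ξ s ∈ s.1.2 := by
    intro s; rw [(hξ s).1]; exact hE.mem_cls_self _ _
  have hΦex : ∀ s : TreeNode X E, ∃ t : TreeNode Y F,
      t.1.1 = s.1.1 ∧ t.1.2 = cls F s.1.1 (ι (ξ s)) := by
    intro s
    refine node_mk_ne hF ?_
    intro hcon
    obtain ⟨y, hy, hyne⟩ := node_exists_ne hE s (hξmem s)
    have hyc : y ∈ cls E s.1.1 (ξ s) := by rw [← (hξ s).1]; exact hy
    have h1 : F s.1.1 (ι (ξ s)) (ι y) := (hiff _ _ _).1 hyc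
    have h2 : ι y ∈ cls F s.1.1 (ι (ξ s)) := h1
    rw [hcon] at h2
    exact hyne (hinj hyc h2)
  choose Φ hΦ1 hΦ2 using hΦex
  refine strictMap hwf Φ ?_
  intro s t hst
  refine ⟨by rw [hΦ1, hΦ1]; exact hst.1, ?_⟩
  rw [hΦ2, hΦ2]
  have hmem : ξ t ∈ cls E s.1.1 (ξ s) := by
    rw [← (hξ s).1]; exact hst.2 (hξmem t)
  have h1 : ι (ξ t) ∈ cls F s.1.1 (ι (ξ s)) := (hiff _ _ _).1 hmem
  calc cls F t.1.1 (ι (ξ t)) ⊆ cls F s.1.1 (ι (ξ t)) := hF.cls_anti (le_of_lt hst.1) _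
    _ = cls F s.1.1 (ι (ξ s)) := hF.cls_eq h1

/-! ### existence of a dgnb -/

theorem dgnb_nonempty (G : Type) [Group G] [TopologicalSpace G] [IsTopologicalGroup G]
    [PolishSpace G] (hna : IsNonArch G) : Nonempty (Dgnb G) := by
  obtain ⟨bb, hbb⟩ := (nhds (1:G)).exists_antitone_basis
  have hmem : ∀ n, bb n ∈ nhds (1:G) := fun n => hbb.mem n
  choose Hsub hopen hsubset using fun n => hna (bb n) (hmem n)
  refine ⟨⟨fun n => Nat.rec ⊤ (fun i acc => acc ⊓ Hsub i) n, ?_, ?_, rfl, ?_⟩⟩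
  · intro n
    induction n with
    | zero => exact isOpen_univ
    | succ n IH =>
      show IsOpen ((Nat.rec ⊤ (fun i acc => acc ⊓ Hsub i) n ⊓ Hsub n : Subgroup G) : Set G)
      rw [Subgroup.coe_inf]
      exact IH.inter (hopen n)
  · intro n
    exact inf_le_left
  · intro U hU
    obtain ⟨n, -, hn⟩ := hbb.toHasBasis.mem_iff.1 hU
    refine ⟨n+1, ?_⟩
    have h1 : (Nat.rec ⊤ (fun i acc => acc ⊓ Hsub i) (n+1) : Subgroup G) ≤ Hsub n :=
      inf_le_right
    exact fun x hx => hn (hsubset n (h1 hx))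

/-! ### the quotient comparison -/

section Quotient

variable {G : Type} [Group G] [TopologicalSpace G] [IsTopologicalGroup G]

theorem omni (hcli : IsCLI G) (N : Subgroup G) [N.Normal] (𝒢 : Dgnb G) (𝒬 : Dgnb (G ⧸ N)) :
    (∀ α : Ordinal, rhoDgnb 𝒢 ≤ Ordinal.omega0 * α → rhoDgnb 𝒬 ≤ Ordinal.omega0 * α) ∧
      omegaPart (rhoDgnb 𝒬) ≤ omegaPart (rhoDgnb 𝒢) := by
  classical
  set π := QuotientGroup.mk' N with hπdef
  have hπsurj : Function.Surjective π := QuotientGroup.mk'_surjective N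
  have hπcont : Continuous π := QuotientGroup.continuous_mk
  -- choice of indices
  have hjex : ∀ k, ∃ n, 𝒢.seq n ≤ (𝒬.seq k).comap π := by
    intro k
    have hop : IsOpen (π ⁻¹' ((𝒬.seq k : Set (G ⧸ N)))) := (𝒬.isOpen k).preimage hπcont
    have h1 : (1:G) ∈ π ⁻¹' ((𝒬.seq k : Set (G ⧸ N))) := by
      rw [Set.mem_preimage, map_one]
      exact one_mem _
    obtain ⟨n, hn⟩ := 𝒢.basis _ (hop.mem_nhds h1)
    exact ⟨n, fun g hg => hn hg⟩
  choose n0 hn0 using hjex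
  set jf : ℕ → ℕ := fun k => Nat.rec (n0 0) (fun i acc => max (acc+1) (n0 (i+1))) k with hjfdef
  have hjfS : ∀ k, jf (k+1) = max (jf k + 1) (n0 (k+1)) := fun k => rfl
  have hjmono : StrictMono jf := by
    apply strictMono_nat_of_lt_succ
    intro n
    rw [hjfS]
    omega
  have hjle : ∀ k, n0 k ≤ jf k := by
    intro k
    cases k with
    | zero => exact le_rfl
    | succ k => rw [hjfS]; omega
  have hjprop : ∀ k, 𝒢.seq (jf k) ≤ (𝒬.seq k).comap π :=
    fun k => le_trans (dgnb_anti 𝒢.seq 𝒢.antitone (hjle k)) (hn0 k)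
  -- spaces and relations
  set FX : ℕ → Type := fun k => (G ⧸ N) ⧸ 𝒬.seq k with hFXdef
  set Fz : ℕ → Type := fun k => G ⧸ 𝒢.seq (jf k) with hFzdef
  set Ffull : ℕ → Type := fun k => G ⧸ 𝒢.seq k with hFfulldef
  set S' : ℕ → Subgroup (G ⧸ N) := fun n => (𝒢.seq n).map π with hS'def
  have osEQ : OS (sigRel 𝒬.seq FX) := os_sigRel _ _ (dgnb_anti 𝒬.seq 𝒬.antitone)
  have osEX : OS (sigRel S' FX) :=
    os_sigRel _ _ (fun {i j} hij => Subgroup.map_mono (dgnb_anti 𝒢.seq 𝒢.antitone hij))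
  have osEZ : OS (sigRel 𝒢.seq Fz) := os_sigRel _ _ (dgnb_anti 𝒢.seq 𝒢.antitone)
  have osFull : OS (sigRel 𝒢.seq Ffull) := os_sigRel _ _ (dgnb_anti 𝒢.seq 𝒢.antitone)
  -- the full tree is well-founded
  have hwfFull : TreeWF (Σ k, Ffull k) (sigRel 𝒢.seq Ffull) := wf_dgnb hcli 𝒢
  -- embed the reindexed tree
  have hiff : ∀ n (x x' : Σ k, Fz k), sigRel 𝒢.seq Fz n x x' ↔
      sigRel 𝒢.seq Ffull n (⟨jf x.1, x.2⟩ : Σ k, Ffull k) ⟨jf x'.1, x'.2⟩ := by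
    intro n x x'
    constructor
    · rintro ⟨g, hg, rfl⟩
      exact ⟨g, hg, rfl⟩
    · rintro ⟨g, hg, heq⟩
      rcases x with ⟨k, z⟩
      rcases x' with ⟨k', z'⟩
      dsimp only at heq
      have h1 : jf k' = jf k := congrArg Sigma.fst heq
      have h2 : k' = k := hjmono.injective h1
      subst h2
      have h3 : z' = g • z := sig_snd_inj (F := Ffull) (k := jf k') heq
      exact ⟨g, hg, by dsimp only; rw [h3]⟩
  have hinj : ∀ {n : ℕ} {x y : Σ k, Fz k}, sigRel 𝒢.seq Fz n x y →
      (⟨jf y.1, y.2⟩ : Σ k, Ffull k) = ⟨jf x.1, x.2⟩ → y = x := by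
    rintro n x y ⟨g, hg, rfl⟩ heq
    rcases x with ⟨k, z⟩
    dsimp only at heq ⊢
    have h3 : g • z = z := sig_snd_inj (F := Ffull) (k := jf k) heq
    rw [h3]
  have h1 := strictMap_of_map osEZ osFull (fun p => (⟨jf p.1, p.2⟩ : Σ k, Ffull k))
    hiff hinj hwfFull
  -- transfer along the quotient maps
  have hresp : ∀ (k : ℕ) (a b : G), @Setoid.r G (QuotientGroup.leftRel (𝒢.seq (jf k))) a b →
      (((π a : G ⧸ N)) : FX k) = ((π b : G ⧸ N) : FX k) := by
    intro k a b hab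
    have h1 : a⁻¹ * b ∈ 𝒢.seq (jf k) := QuotientGroup.leftRel_apply.1 hab
    have h2 : (π a)⁻¹ * π b ∈ 𝒬.seq k := by
      rw [← map_inv, ← map_mul]
      exact Subgroup.mem_comap.1 (hjprop k h1)
    exact QuotientGroup.eq.2 h2
  set fmap : ∀ k, Fz k → FX k := fun k z =>
    Quotient.liftOn' z (fun g => (((π g : G ⧸ N)) : FX k)) (hresp k) with hfmapdef
  have hfmk : ∀ (k : ℕ) (a : G), fmap k ((a : G ⧸ 𝒢.seq (jf k)) : Fz k)
      = ((π a : G ⧸ N) : FX k) := fun k a => rfl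
  set Fbig : (Σ k, Fz k) → (Σ k, FX k) := fun p => ⟨p.1, fmap p.1 p.2⟩ with hFbigdef
  have hequi : ∀ (k : ℕ) (g : G) (z : Fz k), fmap k (g • z) = π g • fmap k z := by
    intro k g z
    obtain ⟨a, rfl⟩ := QuotientGroup.mk_surjective z
    rw [MulAction.Quotient.smul_mk, hfmk, hfmk, MulAction.Quotient.smul_mk,
      _root_.smul_eq_mul, _root_.smul_eq_mul, map_mul]
  have hsurj : Function.Surjective Fbig := by
    rintro ⟨k, y⟩
    obtain ⟨h, rfl⟩ := QuotientGroup.mk_surjective y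
    obtain ⟨a, rfl⟩ := hπsurj h
    exact ⟨⟨k, ((a : G ⧸ 𝒢.seq (jf k)) : Fz k)⟩, rfl⟩
  have hpush : ∀ (n : ℕ) (z : Σ k, Fz k),
      Fbig '' cls (sigRel 𝒢.seq Fz) n z = cls (sigRel S' FX) n (Fbig z) := by
    intro n z
    ext q
    constructor
    · rintro ⟨w, hw, rfl⟩
      obtain ⟨g, hg, rfl⟩ := hw
      refine ⟨π g, Subgroup.mem_map.2 ⟨g, hg, rfl⟩, ?_⟩
      show (⟨z.1, fmap z.1 (g • z.2)⟩ : Σ k, FX k) = ⟨z.1, π g • fmap z.1 z.2⟩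
      rw [hequi]
    · rintro ⟨h, hh, rfl⟩
      obtain ⟨g, hg, rfl⟩ := Subgroup.mem_map.1 hh
      refine ⟨⟨z.1, g • z.2⟩, ⟨g, hg, rfl⟩, ?_⟩
      show (⟨z.1, fmap z.1 (g • z.2)⟩ : Σ k, FX k) = ⟨z.1, π g • fmap z.1 z.2⟩
      rw [hequi]
  have h2 := transfer osEZ osEX hsurj hpush h1.1
  -- hypotheses of the main lemma
  have h0 : ∀ (n : ℕ) (x y : Σ k, FX k), sigRel 𝒬.seq FX n x y → sigRel S' FX 0 x y := by
    rintro n x y ⟨q, hq, rfl⟩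
    refine ⟨q, ?_, rfl⟩
    show q ∈ Subgroup.map π (𝒢.seq 0)
    rw [𝒢.zero_eq_top, Subgroup.map_top_of_surjective π hπsurj]
    exact Subgroup.mem_top q
  have hsing : ∀ x : Σ k, FX k, ∃ n, ∀ y, sigRel S' FX n x y → y = x := by
    rintro ⟨k, t⟩
    have hV : IsOpen {h : G ⧸ N | h • t = t} := smulset_open _ (𝒬.isOpen k) t t
    have hW : IsOpen (π ⁻¹' {h : G ⧸ N | h • t = t}) := hV.preimage hπcont
    have h1W : (1:G) ∈ π ⁻¹' {h : G ⧸ N | h • t = t} := by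
      rw [Set.mem_preimage, map_one]
      exact one_smul _ t
    obtain ⟨n, hn⟩ := 𝒢.basis _ (hW.mem_nhds h1W)
    refine ⟨n, ?_⟩
    rintro y ⟨h, hh, rfl⟩
    obtain ⟨g, hg, rfl⟩ := Subgroup.mem_map.1 hh
    have : π g • t = t := hn hg
    show (⟨k, π g • t⟩ : Σ k, FX k) = ⟨k, t⟩
    rw [this]
  have hMex : ∀ b : ℕ, ∃ mm, ∀ x y : Σ k, FX k,
      sigRel 𝒬.seq FX mm x y → sigRel S' FX b x y := by
    intro b
    have hU : IsOpen ((S' b : Set (G ⧸ N))) := by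
      rw [hS'def]
      have : ((𝒢.seq b).map π : Set (G ⧸ N)) = ((↑) : G → G ⧸ N) '' (𝒢.seq b : Set G) := by
        rfl
      rw [this]
      exact QuotientGroup.isOpenMap_coe _ (𝒢.isOpen b)
    have h1U : (1 : G ⧸ N) ∈ (S' b : Set (G ⧸ N)) := one_mem (S' b)
    obtain ⟨mm, hmm⟩ := 𝒬.basis _ (hU.mem_nhds h1U)
    refine ⟨mm, ?_⟩
    rintro x y ⟨q, hq, rfl⟩
    exact ⟨q, hmm hq, rfl⟩
  have h3 := main osEQ osEX h0 hsing hMex h2.1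
  -- identifications
  have eQ : rhoDgnb 𝒬 = treeRho (Σ k, FX k) (sigRel 𝒬.seq FX) := rfl
  have eG : rhoDgnb 𝒢 = treeRho (Σ k, Ffull k) (sigRel 𝒢.seq Ffull) := rfl
  have hchain : treeRho (Σ k, FX k) (sigRel S' FX) ≤ rhoDgnb 𝒢 := by
    rw [eG]
    exact le_trans h2.2 h1.2
  constructor
  · intro α hα
    rw [eQ]
    exact h3.2.1 α (le_trans hchain hα)
  · obtain ⟨B, hB⟩ := h3.2.2
    rw [eQ] at *
    refine le_trans (omegaPart_le_mul hB) ?_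
    refine le_omegaPart (omega_mul_zero_or_limit _) ?_
    exact le_trans (Ordinal.mul_div_le _ _) hchain

end Quotient


end CLIP

theorem statement_3 (G : Type) [Group G] [TopologicalSpace G] [IsTopologicalGroup G]
    [PolishSpace G] (hna : IsNonArch G) (hcli : IsCLI G)
    (N : Subgroup G) [N.Normal] (hN : IsClosed (N : Set G))
    (α : Ordinal) (hα : α < (Cardinal.aleph 1).ord) :
    (IsAlphaCLI G α → IsAlphaCLI (G ⧸ N) α) ∧
    (IsLAlphaCLI G α → IsLAlphaCLI (G ⧸ N) α) ∧
    (∀ (𝒢 : Dgnb G) (𝒬 : Dgnb (G ⧸ N)), omegaPart (rhoDgnb 𝒬) ≤ omegaPart (rhoDgnb 𝒢)) := by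
  refine ⟨?_, ?_, ?_⟩
  · intro hA 𝒬
    obtain ⟨𝒢₀⟩ := CLIP.dgnb_nonempty G hna
    exact (CLIP.omni hcli N 𝒢₀ 𝒬).1 α (hA 𝒢₀)
  · intro hL 𝒬
    obtain ⟨𝒢₀⟩ := CLIP.dgnb_nonempty G hna
    exact le_trans (CLIP.omni hcli N 𝒢₀ 𝒬).2 (hL 𝒢₀)
  · intro 𝒢 𝒬
    exact (CLIP.omni hcli N 𝒢 𝒬).2

end
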